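/- arXiv:0906.4560 — 4 statements merged into one kernel-verified Lean document; each statement's English description precedes it below -/
import Mathlib

section
/- Let I be a finite set of keys, and for each key i let w1(i), w2(i) ≥ 0. For each i independently, draw r'(i) ~ Exp(min(w1(i), w2(i))) and r''(i) ~ Exp(|w1(i) - w2(i)|) independently (an Exp(0) variable is interpreted as +∞). Set the minimum rank over assignment 1 to be M1 = min over i of (r'(i) if w1(i) ≤ w2(i), else min(r'(i), r''(i))), and symmetrically for M2. Then P(M1 = M2) = (Σᵢ min(w1(i), w2(i))) / (Σᵢ max(w1(i), w2(i))), provided the denominator is positive. -/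
open MeasureTheory ProbabilityTheory Set
open scoped ENNReal

/-- A variable whose tail is constantly 1 is a.s. infinite. -/
lemma tail_ne_top_zero {Ω : Type*} [MeasurableSpace Ω] (P : Measure Ω) [IsProbabilityMeasure P]
    (X : Ω → ℝ≥0∞) (hX : Measurable X)
    (h : ∀ t : ℝ, 0 ≤ t → P {ω | ENNReal.ofReal t < X ω} = 1) :
    P {ω | X ω ≠ ∞} = 0 := by
  have hsub : {ω | X ω ≠ ∞} ⊆ ⋃ n : ℕ, {ω | X ω ≤ ENNReal.ofReal n} := by
    intro ω hω
    obtain ⟨n, hn⟩ := ENNReal.exists_nat_gt (hω : X ω ≠ ∞)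
    refine Set.mem_iUnion.2 ⟨n, ?_⟩
    simpa [ENNReal.ofReal_natCast] using hn.le
  refine measure_mono_null hsub (measure_iUnion_null fun n => ?_)
  have hc : {ω | X ω ≤ ENNReal.ofReal n} = {ω | ENNReal.ofReal n < X ω}ᶜ := by
    ext ω; simp [not_lt]
  have hm : MeasurableSet {ω | ENNReal.ofReal (n : ℝ) < X ω} := hX measurableSet_Ioi
  rw [hc, measure_compl hm (measure_ne_top _ _), h n (Nat.cast_nonneg n)]
  simp

/-- A variable with exponential tail of positive rate is a.s. finite. -/
lemma tail_top_zero {Ω : Type*} [MeasurableSpace Ω] (P : Measure Ω) [IsProbabilityMeasure P]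
    (X : Ω → ℝ≥0∞) (l : ℝ) (hl : 0 < l)
    (h : ∀ t : ℝ, 0 ≤ t → P {ω | ENNReal.ofReal t < X ω} = ENNReal.ofReal (Real.exp (-l * t))) :
    P {ω | X ω = ∞} = 0 := by
  have hb : ∀ n : ℕ, P {ω | X ω = ∞} ≤ ENNReal.ofReal (Real.exp (-l * n)) := by
    intro n
    rw [← h n (Nat.cast_nonneg n)]
    refine measure_mono fun ω hω => ?_
    simp only [Set.mem_setOf_eq] at hω ⊢
    rw [hω]; exact ENNReal.ofReal_lt_top
  have htend : Filter.Tendsto (fun n : ℕ => ENNReal.ofReal (Real.exp (-l * n)))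
      Filter.atTop (nhds 0) := by
    have h1 : Filter.Tendsto (fun n : ℕ => Real.exp (-l * n)) Filter.atTop (nhds 0) := by
      have h2 : ∀ n : ℕ, Real.exp (-l * n) = (Real.exp (-l)) ^ n := by
        intro n; rw [← Real.exp_nat_mul]; ring_nf
      simp_rw [h2]
      exact tendsto_pow_atTop_nhds_zero_of_lt_one (Real.exp_nonneg _)
        (Real.exp_lt_one_iff.2 (by linarith))
    simpa using ENNReal.tendsto_ofReal h1
  have := ge_of_tendsto' htend hb
  simpa using this

/-- Competing exponentials: `P(X < Y) = l / (l + m)`. -/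
lemma key_lt {Ω : Type*} [MeasurableSpace Ω] (P : Measure Ω) [IsProbabilityMeasure P]
    (X Y : Ω → ℝ≥0∞) (hX : Measurable X) (hY : Measurable Y)
    (l m : ℝ) (hl : 0 ≤ l) (hm : 0 ≤ m) (hlm : 0 < l + m)
    (hXt : ∀ t : ℝ, 0 ≤ t → P {ω | ENNReal.ofReal t < X ω} = ENNReal.ofReal (Real.exp (-l * t)))
    (hYt : ∀ t : ℝ, 0 ≤ t → P {ω | ENNReal.ofReal t < Y ω} = ENNReal.ofReal (Real.exp (-m * t)))
    (hInd : IndepFun X Y P) :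
    P {ω | X ω < Y ω} = ENNReal.ofReal (l / (l + m)) := by
  rcases eq_or_lt_of_le hm with hm0 | hm'
  · -- m = 0 : Y is a.s. ∞
    have hl' : 0 < l := by linarith
    have hY1 : P {ω | Y ω ≠ ∞} = 0 := by
      refine tail_ne_top_zero P Y hY fun t ht => ?_
      rw [hYt t ht, ← hm0]; norm_num
    have hX1 : P {ω | X ω = ∞} = 0 := tail_top_zero P X l hl' hXt
    have hcompl : {ω | X ω < Y ω}ᶜ ⊆ {ω | Y ω ≠ ∞} ∪ {ω | X ω = ∞} := by
      intro ω hω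
      by_cases hYe : Y ω = ∞
      · right
        simp only [Set.mem_compl_iff, Set.mem_setOf_eq, not_lt] at hω
        rw [hYe] at hω
        exact top_le_iff.mp hω
      · exact Or.inl hYe
    have h0 : P {ω | X ω < Y ω}ᶜ = 0 :=
      measure_mono_null hcompl (measure_union_null hY1 hX1)
    have hmeas : MeasurableSet {ω | X ω < Y ω} := measurableSet_lt hX hY
    rw [prob_compl_eq_zero_iff hmeas] at h0
    rw [h0, ← hm0]
    rw [add_zero, div_self (ne_of_gt hl')]
    simp
  · rcases eq_or_lt_of_le hl with hl0 | hl'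
    · -- l = 0 : X is a.s. ∞
      have hX1 : P {ω | X ω ≠ ∞} = 0 := by
        refine tail_ne_top_zero P X hX fun t ht => ?_
        rw [hXt t ht, ← hl0]; norm_num
      have hsub : {ω | X ω < Y ω} ⊆ {ω | X ω ≠ ∞} := by
        intro ω hω
        exact (lt_top_iff_ne_top.mp (lt_of_lt_of_le hω le_top))
      rw [measure_mono_null hsub hX1, ← hl0]
      simp
    · -- main case : both rates positive
      have hνX : IsProbabilityMeasure (P.map X) := Measure.isProbabilityMeasure_map hX.aemeasurable
      have hνY : IsProbabilityMeasure (P.map Y) := Measure.isProbabilityMeasure_map hY.aemeasurable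
      have hmap : P.map (fun ω => (X ω, Y ω)) = (P.map X).prod (P.map Y) :=
        (indepFun_iff_map_prod_eq_prod_map_map hX.aemeasurable hY.aemeasurable).mp hInd
      have hs : MeasurableSet {p : ℝ≥0∞ × ℝ≥0∞ | p.1 < p.2} :=
        measurableSet_lt measurable_fst measurable_snd
      have h1 : P {ω | X ω < Y ω} = ((P.map X).prod (P.map Y)) {p | p.1 < p.2} := by
        rw [← hmap, Measure.map_apply (hX.prodMk hY) hs]
        rfl
      set fr : ℝ≥0∞ → ℝ := fun x => if x = ∞ then 0 else Real.exp (-m * x.toReal) with hfr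
      have hfr_nn : ∀ x, 0 ≤ fr x := by
        intro x; by_cases h : x = ∞ <;> simp [fr, h, Real.exp_nonneg]
      have hfr_mble : Measurable fr := by
        refine Measurable.ite (measurableSet_singleton ∞) measurable_const ?_
        exact (ENNReal.measurable_toReal.const_mul (-m)).exp
      have hslice : ∀ x : ℝ≥0∞, (P.map Y) (Ioi x) = ENNReal.ofReal (fr x) := by
        intro x
        by_cases hx : x = ∞
        · subst hx
          simp [fr, Set.Ioi_top]
        · rw [Measure.map_apply hY measurableSet_Ioi]
          have hx' : x = ENNReal.ofReal x.toReal := (ENNReal.ofReal_toReal hx).symm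
          have : Y ⁻¹' Ioi x = {ω | ENNReal.ofReal x.toReal < Y ω} := by
            rw [← hx']; rfl
          rw [this, hYt x.toReal ENNReal.toReal_nonneg]
          simp [fr, hx]
      have h2 : P {ω | X ω < Y ω} = ∫⁻ x, ENNReal.ofReal (fr x) ∂(P.map X) := by
        rw [h1, Measure.prod_apply hs]
        refine lintegral_congr fun x => ?_
        have : Prod.mk x ⁻¹' {p : ℝ≥0∞ × ℝ≥0∞ | p.1 < p.2} = Ioi x := rfl
        rw [this, hslice x]
      rw [h2, lintegral_eq_lintegral_meas_le (P.map X)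
        (Filter.Eventually.of_forall hfr_nn) hfr_mble.aemeasurable]
      -- split the outer integral
      have hsplit : (Ioi (0:ℝ)) = Ioo 0 1 ∪ Ici 1 := (Set.Ioo_union_Ici_eq_Ioi zero_lt_one).symm
      have hdisj : Disjoint (Ioo (0:ℝ) 1) (Ici 1) := by
        rw [Set.disjoint_left]
        rintro x ⟨_, h1x⟩ h2x
        exact absurd h2x (not_le.2 h1x)
      rw [hsplit, lintegral_union measurableSet_Ici hdisj]
      -- second piece is zero
      have hzero1 : P {ω | ENNReal.ofReal 0 < X ω} = 1 := by
        rw [hXt 0 le_rfl]; norm_num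
      have hX0 : (P.map X) {(0 : ℝ≥0∞)} = 0 := by
        rw [Measure.map_apply hX (measurableSet_singleton _)]
        have hsub : X ⁻¹' {0} ⊆ {ω | ENNReal.ofReal 0 < X ω}ᶜ := by
          intro ω hω
          simp only [Set.mem_preimage, Set.mem_singleton_iff] at hω
          simp [hω]
        refine measure_mono_null hsub ?_
        have hm2 : MeasurableSet {ω | ENNReal.ofReal 0 < X ω} := hX measurableSet_Ioi
        rw [measure_compl hm2 (measure_ne_top _ _), hzero1]
        simp
      have hpiece2 : ∫⁻ t in Ici (1:ℝ), (P.map X) {x | t ≤ fr x} = 0 := by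
        have hcong : ∀ t, t ∈ Ici (1:ℝ) → (P.map X) {x | t ≤ fr x} = (fun _ => (0:ℝ≥0∞)) t := by
          intro t ht
          have ht : (1:ℝ) ≤ t := ht
          have hsub : {x | t ≤ fr x} ⊆ {(0 : ℝ≥0∞)} := by
            intro x hx
            simp only [Set.mem_setOf_eq] at hx
            by_cases hxe : x = ∞
            · rw [hxe] at hx; simp only [fr, if_pos rfl] at hx; linarith
            · simp only [fr, if_neg hxe] at hx
              have h1 : Real.exp (-m * x.toReal) ≤ 1 := by
                refine Real.exp_le_one_iff.2 ?_
                have := ENNReal.toReal_nonneg (a := x)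
                nlinarith
              have h2 : (1:ℝ) ≤ Real.exp (-m * x.toReal) := le_trans ht hx
              have h3 : Real.exp (-m * x.toReal) = 1 := le_antisymm h1 h2
              have h4 : -m * x.toReal = 0 := Real.exp_eq_exp.mp (by rw [h3, Real.exp_zero])
              have h5 : x.toReal = 0 := by
                rcases mul_eq_zero.mp h4 with h | h
                · exfalso; linarith
                · exact h
              rcases (ENNReal.toReal_eq_zero_iff x).mp h5 with h | h
              · exact h
              · exact absurd h hxe
          exact measure_mono_null hsub hX0
        rw [setLIntegral_congr_fun measurableSet_Ici (fun t ht => hcong t ht)]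
        exact lintegral_zero
      -- first piece
      set p : ℝ := l / m with hpdef
      have hp : 0 < p := div_pos hl' hm'
      have hcong1 : ∀ t, t ∈ Ioo (0:ℝ) 1 →
          (P.map X) {x | t ≤ fr x} = (fun t : ℝ => 1 - ENNReal.ofReal (t ^ p)) t := by
        intro t ht
        obtain ⟨ht0, ht1⟩ := ht
        set c : ℝ := -Real.log t / m with hcdef
        have hlogt : Real.log t < 0 := Real.log_neg ht0 ht1
        have hc_nn : 0 ≤ c := div_nonneg (by linarith) hm'.le
        have hset : {x | t ≤ fr x} = {x | x ≤ ENNReal.ofReal c} := by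
          ext x
          simp only [Set.mem_setOf_eq]
          by_cases hxe : x = ∞
          · refine iff_of_false ?_ ?_
            · simp only [fr, if_pos hxe]; linarith
            · rw [hxe]; exact fun h => absurd (top_le_iff.mp h) ENNReal.ofReal_ne_top
          · rw [show fr x = Real.exp (-m * x.toReal) from if_neg hxe]
            rw [← Real.log_le_iff_le_exp ht0,
              ENNReal.le_ofReal_iff_toReal_le hxe hc_nn, hcdef, le_div_iff₀ hm']
            constructor <;> intro h <;> nlinarith
        rw [hset]
        have hc2 : {x : ℝ≥0∞ | x ≤ ENNReal.ofReal c} = {x | ENNReal.ofReal c < x}ᶜ := by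
          ext x; simp [not_lt]
        have hm3 : MeasurableSet {x : ℝ≥0∞ | ENNReal.ofReal c < x} := measurableSet_Ioi
        rw [hc2, measure_compl hm3 (measure_ne_top _ _)]
        have htail : (P.map X) {x | ENNReal.ofReal c < x} = ENNReal.ofReal (Real.exp (-l * c)) := by
          rw [Measure.map_apply hX (by exact measurableSet_Ioi)]
          exact hXt c hc_nn
        rw [htail]
        have hpow : Real.exp (-l * c) = t ^ p := by
          rw [Real.rpow_def_of_pos ht0]
          congr 1
          rw [hcdef, hpdef]
          field_simp
        rw [hpow, measure_univ]
      rw [setLIntegral_congr_fun measurableSet_Ioo (fun t ht => hcong1 t ht), hpiece2,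
        add_zero]
      have hgm : Measurable fun t : ℝ => ENNReal.ofReal (t ^ p) :=
        (Real.continuous_rpow_const hp.le).measurable.ennreal_ofReal
      have hle1 : (fun t : ℝ => ENNReal.ofReal (t ^ p)) ≤ᵐ[volume.restrict (Ioo (0:ℝ) 1)]
          fun _ => (1 : ℝ≥0∞) := by
        filter_upwards [ae_restrict_mem measurableSet_Ioo] with t ht
        exact ENNReal.ofReal_le_one.2 (Real.rpow_le_one ht.1.le ht.2.le hp.le)
      have hone : ∫⁻ _t in Ioo (0:ℝ) 1, (1:ℝ≥0∞) = 1 := by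
        rw [setLIntegral_one, Real.volume_Ioo]
        norm_num
      have hfin : ∫⁻ t in Ioo (0:ℝ) 1, ENNReal.ofReal (t ^ p) ≠ ∞ := by
        refine ne_top_of_le_ne_top (by simp : (1:ℝ≥0∞) ≠ ∞) ?_
        calc ∫⁻ t in Ioo (0:ℝ) 1, ENNReal.ofReal (t ^ p)
            ≤ ∫⁻ _t in Ioo (0:ℝ) 1, (1:ℝ≥0∞) := lintegral_mono_ae hle1
          _ = 1 := hone
      rw [lintegral_sub hgm hfin hle1, hone]
      have hint : IntegrableOn (fun t : ℝ => t ^ p) (Ioo 0 1) volume := by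
        have h1 : IntervalIntegrable (fun t : ℝ => t ^ p) volume 0 1 :=
          intervalIntegral.intervalIntegrable_rpow' (by linarith)
        exact h1.1.mono_set Set.Ioo_subset_Ioc_self
      have hnn : 0 ≤ᵐ[volume.restrict (Ioo (0:ℝ) 1)] fun t : ℝ => t ^ p := by
        filter_upwards [ae_restrict_mem measurableSet_Ioo] with t ht
        exact Real.rpow_nonneg ht.1.le p
      have hlint : ∫⁻ t in Ioo (0:ℝ) 1, ENNReal.ofReal (t ^ p) =
          ENNReal.ofReal (∫ t in Ioo (0:ℝ) 1, t ^ p) :=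
        (ofReal_integral_eq_lintegral_ofReal hint hnn).symm
      have hval : ∫ t in Ioo (0:ℝ) 1, t ^ p = 1 / (p + 1) := by
        rw [← integral_Ioc_eq_integral_Ioo, ← intervalIntegral.integral_of_le zero_le_one,
          integral_rpow (Or.inl (by linarith))]
        rw [Real.one_rpow, Real.zero_rpow (by positivity)]
        norm_num
      rw [hlint, hval]
      have hfrac : 1 / (p + 1) = m / (l + m) := by
        rw [hpdef]
        field_simp
      have hfrac2 : l / (l + m) = 1 - m / (l + m) := by
        field_simp
        ring
      rw [hfrac, hfrac2, ENNReal.ofReal_sub _ (by positivity), ENNReal.ofReal_one]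

lemma key_eq {Ω : Type*} [MeasurableSpace Ω] (P : Measure Ω) [IsProbabilityMeasure P]
    (X Y : Ω → ℝ≥0∞) (hX : Measurable X) (hY : Measurable Y)
    (l m : ℝ) (hl : 0 ≤ l) (hm : 0 ≤ m) (hlm : 0 < l + m)
    (hXt : ∀ t : ℝ, 0 ≤ t → P {ω | ENNReal.ofReal t < X ω} = ENNReal.ofReal (Real.exp (-l * t)))
    (hYt : ∀ t : ℝ, 0 ≤ t → P {ω | ENNReal.ofReal t < Y ω} = ENNReal.ofReal (Real.exp (-m * t)))
    (hInd : IndepFun X Y P) :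
    P {ω | X ω = Y ω} = 0 := by
  have h1 := key_lt P X Y hX hY l m hl hm hlm hXt hYt hInd
  have h2 := key_lt P Y X hY hX m l hm hl (by linarith) hYt hXt hInd.symm
  have hd1 : Disjoint {ω | Y ω < X ω} {ω | X ω = Y ω} := by
    rw [Set.disjoint_left]
    intro ω h1' h2'
    simp only [Set.mem_setOf_eq] at h1' h2'
    rw [h2'] at h1'
    exact lt_irrefl _ h1'
  have hd2 : Disjoint {ω | X ω < Y ω} ({ω | Y ω < X ω} ∪ {ω | X ω = Y ω}) := by
    rw [Set.disjoint_left]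
    intro ω h1'
    simp only [Set.mem_setOf_eq, Set.mem_union]
    simp only [Set.mem_setOf_eq] at h1'
    rintro (h | h)
    · exact absurd h1' (lt_asymm h)
    · rw [h] at h1'; exact absurd h1' (lt_irrefl _)
  have huniv : {ω | X ω < Y ω} ∪ ({ω | Y ω < X ω} ∪ {ω | X ω = Y ω}) = Set.univ := by
    ext ω
    simp only [Set.mem_union, Set.mem_setOf_eq, Set.mem_univ, iff_true]
    rcases lt_trichotomy (X ω) (Y ω) with h | h | h
    · exact Or.inl h
    · exact Or.inr (Or.inr h)
    · exact Or.inr (Or.inl h)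
  have hmeq : MeasurableSet {ω | X ω = Y ω} := by
    have : {ω | X ω = Y ω} = {ω | X ω ≤ Y ω} ∩ {ω | Y ω ≤ X ω} := by
      ext ω; simp only [Set.mem_setOf_eq, Set.mem_inter_iff]
      constructor
      · intro h; exact ⟨le_of_eq h, ge_of_eq h⟩
      · rintro ⟨h1', h2'⟩; exact le_antisymm h1' h2'
    rw [this]
    exact (measurableSet_le hX hY).inter (measurableSet_le hY hX)
  have hmgt : MeasurableSet {ω | Y ω < X ω} := measurableSet_lt hY hX
  have hsum : P {ω | X ω < Y ω} + (P {ω | Y ω < X ω} + P {ω | X ω = Y ω}) = 1 := by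
    rw [← measure_union hd1 hmeq, ← measure_union hd2 (hmgt.union hmeq), huniv, measure_univ]
  rw [add_comm m l] at h2
  rw [h1, h2] at hsum
  have hofr : ENNReal.ofReal (l / (l + m)) + ENNReal.ofReal (m / (l + m)) = 1 := by
    rw [← ENNReal.ofReal_add (by positivity) (by positivity), ← add_div,
      div_self (by linarith : l + m ≠ 0), ENNReal.ofReal_one]
  rw [← add_assoc, hofr] at hsum
  nth_rewrite 2 [show (1:ℝ≥0∞) = 1 + 0 by rw [add_zero]] at hsum
  exact (ENNReal.add_right_inj ENNReal.one_ne_top).mp hsum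

lemma key_le {Ω : Type*} [MeasurableSpace Ω] (P : Measure Ω) [IsProbabilityMeasure P]
    (X Y : Ω → ℝ≥0∞) (hX : Measurable X) (hY : Measurable Y)
    (l m : ℝ) (hl : 0 ≤ l) (hm : 0 ≤ m) (hlm : 0 < l + m)
    (hXt : ∀ t : ℝ, 0 ≤ t → P {ω | ENNReal.ofReal t < X ω} = ENNReal.ofReal (Real.exp (-l * t)))
    (hYt : ∀ t : ℝ, 0 ≤ t → P {ω | ENNReal.ofReal t < Y ω} = ENNReal.ofReal (Real.exp (-m * t)))
    (hInd : IndepFun X Y P) :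
    P {ω | X ω ≤ Y ω} = ENNReal.ofReal (l / (l + m)) := by
  have hmeq : MeasurableSet {ω | X ω = Y ω} := by
    have : {ω | X ω = Y ω} = {ω | X ω ≤ Y ω} ∩ {ω | Y ω ≤ X ω} := by
      ext ω; simp only [Set.mem_setOf_eq, Set.mem_inter_iff]
      constructor
      · intro h; exact ⟨le_of_eq h, ge_of_eq h⟩
      · rintro ⟨h1', h2'⟩; exact le_antisymm h1' h2'
    rw [this]
    exact (measurableSet_le hX hY).inter (measurableSet_le hY hX)
  have hu : {ω | X ω ≤ Y ω} = {ω | X ω < Y ω} ∪ {ω | X ω = Y ω} := by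
    ext ω
    simp only [Set.mem_setOf_eq, Set.mem_union]
    exact le_iff_lt_or_eq
  have hd : Disjoint {ω | X ω < Y ω} {ω | X ω = Y ω} := by
    rw [Set.disjoint_left]
    intro ω h1' h2'
    simp only [Set.mem_setOf_eq] at h1' h2'
    rw [h2'] at h1'
    exact lt_irrefl _ h1'
  rw [hu, measure_union hd hmeq,
    key_lt P X Y hX hY l m hl hm hlm hXt hYt hInd,
    key_eq P X Y hX hY l m hl hm hlm hXt hYt hInd, add_zero]

lemma inf_tail {Ω ι' : Type*} [MeasurableSpace Ω] {P : Measure Ω}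
    {F : ι' → Ω → ℝ≥0∞}
    (hInd : iIndepFun (m := fun _ : ι' => (inferInstance : MeasurableSpace ℝ≥0∞)) F P)
    (s : Finset ι') (t : ℝ) :
    P {ω | ENNReal.ofReal t < ⨅ p ∈ s, F p ω} = ∏ p ∈ s, P {ω | ENNReal.ofReal t < F p ω} := by
  classical
  have hset : {ω | ENNReal.ofReal t < ⨅ p ∈ s, F p ω}
      = ⋂ p ∈ s, F p ⁻¹' Set.Ioi (ENNReal.ofReal t) := by
    ext ω
    simp only [Set.mem_setOf_eq, Set.mem_iInter, Set.mem_preimage, Set.mem_Ioi]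
    rw [← Finset.inf_eq_iInf, Finset.lt_inf_iff (ENNReal.ofReal_lt_top)]
  rw [hset,
    hInd.measure_inter_preimage_eq_mul s (sets := fun _ => Set.Ioi (ENNReal.ofReal t))
      (fun i _ => measurableSet_Ioi)]
  rfl

lemma binf_image {α β : Type*} [DecidableEq β] (g : α → β) (f : β → ℝ≥0∞) (s : Finset α) :
    ⨅ p ∈ s.image g, f p = ⨅ i ∈ s, f (g i) := by
  rw [← Finset.inf_eq_iInf, ← Finset.inf_eq_iInf, Finset.inf_image]
  rfl

lemma binf_univ {α : Type*} [Fintype α] (f : α → ℝ≥0∞) :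
    ⨅ i ∈ Finset.univ, f i = ⨅ i, f i := by
  simp

lemma binf_filter {α : Type*} [Fintype α] (p : α → Prop) [DecidablePred p] (f : α → ℝ≥0∞) :
    ⨅ i ∈ Finset.univ.filter p, f i = ⨅ i, if p i then f i else ⊤ := by
  refine iInf_congr fun i => ?_
  by_cases h : p i <;> simp [Finset.mem_filter, h]

lemma measurable_binf {Ω ι' : Type*} [MeasurableSpace Ω] [Countable ι']
    (F : ι' → Ω → ℝ≥0∞) (hF : ∀ p, Measurable (F p)) (s : Finset ι') :
    Measurable fun ω => ⨅ p ∈ s, F p ω :=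
  Measurable.iInf fun p => Measurable.iInf fun _ => hF p

/-- Weighted Jaccard property of independent-differences consistent exponential ranks. -/
theorem stmt_5 {Ω ι : Type*} [MeasurableSpace Ω] [Fintype ι] [Nonempty ι]
    (P : Measure Ω) [IsProbabilityMeasure P]
    (w1 w2 : ι → ℝ) (hw1 : ∀ i, 0 ≤ w1 i) (hw2 : ∀ i, 0 ≤ w2 i)
    (r' r'' : ι → Ω → ℝ≥0∞)
    (hmeas' : ∀ i, Measurable (r' i)) (hmeas'' : ∀ i, Measurable (r'' i))
    -- all the variables `r' i`, `r'' i` (over all keys) are mutually independent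
    (hInd : iIndepFun (m := fun _ : ι × Bool => (inferInstance : MeasurableSpace ℝ≥0∞))
      (fun p => if p.2 then r' p.1 else r'' p.1) P)
    -- `r' i ~ Exp(min (w1 i) (w2 i))`, with `Exp 0` interpreted as the constant `∞`
    (htail' : ∀ i, ∀ t : ℝ, 0 ≤ t →
      P {ω | ENNReal.ofReal t < r' i ω} = ENNReal.ofReal (Real.exp (-(min (w1 i) (w2 i)) * t)))
    -- `r'' i ~ Exp(|w1 i - w2 i|)`, with `Exp 0` interpreted as the constant `∞`
    (htail'' : ∀ i, ∀ t : ℝ, 0 ≤ t →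
      P {ω | ENNReal.ofReal t < r'' i ω} = ENNReal.ofReal (Real.exp (-(|w1 i - w2 i|) * t)))
    (hpos : 0 < ∑ i, max (w1 i) (w2 i)) :
    P {ω | (⨅ i, (if w1 i ≤ w2 i then r' i ω else min (r' i ω) (r'' i ω)))
          = (⨅ i, (if w2 i ≤ w1 i then r' i ω else min (r' i ω) (r'' i ω)))}
      = ENNReal.ofReal ((∑ i, min (w1 i) (w2 i)) / (∑ i, max (w1 i) (w2 i))) := by
  classical
  by_cases heq : ∀ i, w1 i = w2 i
  · -- degenerate case : all weights equal
    have hset : {ω | (⨅ i, (if w1 i ≤ w2 i then r' i ω else min (r' i ω) (r'' i ω)))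
          = (⨅ i, (if w2 i ≤ w1 i then r' i ω else min (r' i ω) (r'' i ω)))} = Set.univ := by
      ext ω
      simp only [Set.mem_setOf_eq, Set.mem_univ, iff_true]
      exact iInf_congr fun i => by rw [heq i]
    have hmm : ∀ i, min (w1 i) (w2 i) = max (w1 i) (w2 i) := fun i => by rw [heq i]; simp
    rw [hset, measure_univ, Finset.sum_congr rfl (fun i _ => hmm i),
      div_self (ne_of_gt hpos), ENNReal.ofReal_one]
  push_neg at heq
  obtain ⟨i0, hi0⟩ := heq
  set F : ι × Bool → Ω → ℝ≥0∞ := fun p => if p.2 then r' p.1 else r'' p.1 with hF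
  have hFmeas : ∀ p : ι × Bool, Measurable (F p) := by
    intro p
    by_cases hb : p.2
    · simpa [hF, hb] using hmeas' p.1
    · simpa [hF, hb] using hmeas'' p.1
  set a : ι → ℝ := fun i => min (w1 i) (w2 i) with ha_def
  set b : ι → ℝ := fun i => |w1 i - w2 i| with hb_def
  have ha : ∀ i, 0 ≤ a i := fun i => le_min (hw1 i) (hw2 i)
  have hb0 : ∀ i, 0 ≤ b i := fun i => abs_nonneg _
  have hab : ∀ i, a i + b i = max (w1 i) (w2 i) := by
    intro i
    have h := max_sub_min_eq_abs (w1 i) (w2 i)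
    have h2 := abs_sub_comm (w1 i) (w2 i)
    simp only [ha_def, hb_def]
    linarith
  -- index sets
  set S1 : Finset ι := Finset.univ.filter (fun i => w2 i < w1 i) with hS1
  set S2 : Finset ι := Finset.univ.filter (fun i => w1 i < w2 i) with hS2
  set Sne : Finset ι := Finset.univ.filter (fun i => w1 i ≠ w2 i) with hSne
  set strue : Finset (ι × Bool) := Finset.univ.image (fun i => (i, true)) with hstrue
  set s1 : Finset (ι × Bool) := S1.image (fun i => (i, false)) with hs1
  set s2 : Finset (ι × Bool) := S2.image (fun i => (i, false)) with hs2
  set sne : Finset (ι × Bool) := Sne.image (fun i => (i, false)) with hsne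
  -- rates
  set lam : ℝ := ∑ i, a i with hlam
  set m1 : ℝ := ∑ i ∈ S1, b i with hm1
  set m2 : ℝ := ∑ i ∈ S2, b i with hm2
  set mu : ℝ := ∑ i ∈ Sne, b i with hmu
  have hlam_nn : 0 ≤ lam := Finset.sum_nonneg fun i _ => ha i
  have hm1_nn : 0 ≤ m1 := Finset.sum_nonneg fun i _ => hb0 i
  have hm2_nn : 0 ≤ m2 := Finset.sum_nonneg fun i _ => hb0 i
  have hdisjS12 : Disjoint S1 S2 := by
    rw [Finset.disjoint_left]
    intro i h1 h2
    simp only [hS1, hS2, Finset.mem_filter] at h1 h2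
    exact lt_asymm h1.2 h2.2
  have hS12 : S1 ∪ S2 = Sne := by
    ext i
    simp only [hS1, hS2, hSne, Finset.mem_union, Finset.mem_filter, Finset.mem_univ, true_and]
    constructor
    · rintro (h | h)
      · exact (ne_of_lt h).symm
      · exact ne_of_lt h
    · intro h
      exact (lt_or_gt_of_ne h).symm
  have hmu12 : m1 + m2 = mu := by
    rw [hm1, hm2, hmu, ← Finset.sum_union hdisjS12, hS12]
  have hmuB : mu = ∑ i, b i := by
    rw [hmu]
    refine Finset.sum_subset (Finset.filter_subset _ _) fun i _ hni => ?_
    simp only [hSne, Finset.mem_filter, Finset.mem_univ, true_and, not_not] at hni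
    simp [hb_def, hni]
  have hmaxsum : ∑ i, max (w1 i) (w2 i) = lam + mu := by
    rw [hlam, hmuB, ← Finset.sum_add_distrib]
    exact (Finset.sum_congr rfl fun i _ => (hab i).symm)
  have hposlm : 0 < lam + mu := by rw [← hmaxsum]; exact hpos
  have hmupos : 0 < m1 + m2 := by
    rw [hmu12, hmu]
    refine Finset.sum_pos' (fun i _ => hb0 i) ⟨i0, ?_, ?_⟩
    · simp [hSne, Finset.mem_filter, hi0]
    · exact abs_pos.mpr (sub_ne_zero.mpr hi0)
  -- random variables
  set R : Ω → ℝ≥0∞ := fun ω => ⨅ p ∈ strue, F p ω with hRdef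
  set D1 : Ω → ℝ≥0∞ := fun ω => ⨅ p ∈ s1, F p ω with hD1def
  set D2 : Ω → ℝ≥0∞ := fun ω => ⨅ p ∈ s2, F p ω with hD2def
  set D : Ω → ℝ≥0∞ := fun ω => ⨅ p ∈ sne, F p ω with hDdef
  have hRm : Measurable R := measurable_binf F hFmeas strue
  have hD1m : Measurable D1 := measurable_binf F hFmeas s1
  have hD2m : Measurable D2 := measurable_binf F hFmeas s2
  have hDm : Measurable D := measurable_binf F hFmeas sne
  -- tails
  have htailR : ∀ t : ℝ, 0 ≤ t →
      P {ω | ENNReal.ofReal t < R ω} = ENNReal.ofReal (Real.exp (-lam * t)) := by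
    intro t ht
    rw [hRdef]
    rw [inf_tail hInd strue t, hstrue,
      Finset.prod_image (fun x _ y _ h => by simpa using h)]
    have hterm : ∀ i : ι, P {ω | ENNReal.ofReal t < F (i, true) ω}
        = ENNReal.ofReal (Real.exp (-(a i) * t)) := by
      intro i
      have hFi : F (i, true) = r' i := by simp [hF]
      rw [hFi, ha_def]
      exact htail' i t ht
    rw [Finset.prod_congr rfl fun i _ => hterm i,
      ← ENNReal.ofReal_prod_of_nonneg (fun i _ => Real.exp_nonneg _), ← Real.exp_sum]
    congr 2
    rw [← Finset.sum_neg_distrib, Finset.sum_mul]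
  have htailB : ∀ (Sx : Finset ι) (t : ℝ), 0 ≤ t →
      P {ω | ENNReal.ofReal t < ⨅ p ∈ Sx.image (fun i => (i, false)), F p ω}
        = ENNReal.ofReal (Real.exp (-(∑ i ∈ Sx, b i) * t)) := by
    intro Sx t ht
    rw [inf_tail hInd _ t, Finset.prod_image (fun x _ y _ h => by simpa using h)]
    have hterm : ∀ i : ι, P {ω | ENNReal.ofReal t < F (i, false) ω}
        = ENNReal.ofReal (Real.exp (-(b i) * t)) := by
      intro i
      have hFi : F (i, false) = r'' i := by simp [hF]
      rw [hFi, hb_def]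
      exact htail'' i t ht
    rw [Finset.prod_congr rfl fun i _ => hterm i,
      ← ENNReal.ofReal_prod_of_nonneg (fun i _ => Real.exp_nonneg _), ← Real.exp_sum]
    congr 2
    rw [← Finset.sum_neg_distrib, Finset.sum_mul]
  have htailD1 : ∀ t : ℝ, 0 ≤ t →
      P {ω | ENNReal.ofReal t < D1 ω} = ENNReal.ofReal (Real.exp (-m1 * t)) := by
    intro t ht
    rw [hD1def, hm1, hs1]
    exact htailB S1 t ht
  have htailD2 : ∀ t : ℝ, 0 ≤ t →
      P {ω | ENNReal.ofReal t < D2 ω} = ENNReal.ofReal (Real.exp (-m2 * t)) := by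
    intro t ht
    rw [hD2def, hm2, hs2]
    exact htailB S2 t ht
  have htailD : ∀ t : ℝ, 0 ≤ t →
      P {ω | ENNReal.ofReal t < D ω} = ENNReal.ofReal (Real.exp (-mu * t)) := by
    intro t ht
    rw [hDdef, hmu, hsne]
    exact htailB Sne t ht
  -- pointwise identities
  have hRω : ∀ ω, R ω = ⨅ i, r' i ω := by
    intro ω
    have h0 : R ω = ⨅ p ∈ strue, F p ω := rfl
    rw [h0, hstrue, binf_image, binf_univ]
    exact iInf_congr fun i => by simp [hF]
  have hD1ω : ∀ ω, D1 ω = ⨅ i, (if w2 i < w1 i then r'' i ω else ⊤) := by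
    intro ω
    have h0 : D1 ω = ⨅ p ∈ s1, F p ω := rfl
    rw [h0, hs1, binf_image,
      show (⨅ i ∈ S1, F (i, false) ω) = ⨅ i ∈ S1, r'' i ω from
        iInf_congr fun i => iInf_congr fun _ => by simp [hF],
      hS1]
    exact binf_filter _ _
  have hD2ω : ∀ ω, D2 ω = ⨅ i, (if w1 i < w2 i then r'' i ω else ⊤) := by
    intro ω
    have h0 : D2 ω = ⨅ p ∈ s2, F p ω := rfl
    rw [h0, hs2, binf_image,
      show (⨅ i ∈ S2, F (i, false) ω) = ⨅ i ∈ S2, r'' i ω from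
        iInf_congr fun i => iInf_congr fun _ => by simp [hF],
      hS2]
    exact binf_filter _ _
  have hDω : ∀ ω, D ω = ⨅ i, (if w1 i ≠ w2 i then r'' i ω else ⊤) := by
    intro ω
    have h0 : D ω = ⨅ p ∈ sne, F p ω := rfl
    rw [h0, hsne, binf_image,
      show (⨅ i ∈ Sne, F (i, false) ω) = ⨅ i ∈ Sne, r'' i ω from
        iInf_congr fun i => iInf_congr fun _ => by simp [hF],
      hSne]
    exact binf_filter _ _
  have hM1 : ∀ ω, (⨅ i, (if w1 i ≤ w2 i then r' i ω else min (r' i ω) (r'' i ω))) = R ω ⊓ D1 ω := by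
    intro ω
    rw [hRω ω, hD1ω ω, ← iInf_inf_eq]
    refine iInf_congr fun i => ?_
    by_cases h : w1 i ≤ w2 i
    · rw [if_pos h, if_neg (not_lt.2 h), inf_top_eq]
    · rw [if_neg h, if_pos (not_le.1 h)]
  have hM2 : ∀ ω, (⨅ i, (if w2 i ≤ w1 i then r' i ω else min (r' i ω) (r'' i ω))) = R ω ⊓ D2 ω := by
    intro ω
    rw [hRω ω, hD2ω ω, ← iInf_inf_eq]
    refine iInf_congr fun i => ?_
    by_cases h : w2 i ≤ w1 i
    · rw [if_pos h, if_neg (not_lt.2 h), inf_top_eq]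
    · rw [if_neg h, if_pos (not_le.1 h)]
  have hDsplit : ∀ ω, D ω = D1 ω ⊓ D2 ω := by
    intro ω
    rw [hDω ω, hD1ω ω, hD2ω ω, ← iInf_inf_eq]
    refine iInf_congr fun i => ?_
    rcases lt_trichotomy (w1 i) (w2 i) with h | h | h
    · rw [if_pos (ne_of_lt h), if_neg (lt_asymm h), if_pos h, top_inf_eq]
    · rw [if_neg (fun hc => hc h : ¬w1 i ≠ w2 i), if_neg (by rw [h]; exact lt_irrefl _),
        if_neg (by rw [h]; exact lt_irrefl _), inf_top_eq]
    · rw [if_pos (ne_of_gt h), if_pos h, if_neg (lt_asymm h), inf_top_eq]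
  -- independence
  have hdisj_ts : Disjoint strue sne := by
    rw [Finset.disjoint_left]
    intro p hp1 hp2
    rw [hstrue, Finset.mem_image] at hp1
    rw [hsne, Finset.mem_image] at hp2
    obtain ⟨i, -, hi⟩ := hp1
    obtain ⟨j, -, hj⟩ := hp2
    rw [← hi] at hj
    exact Bool.false_ne_true (congrArg Prod.snd hj)
  have hdisj_12 : Disjoint s1 s2 := by
    rw [Finset.disjoint_left]
    intro p hp1 hp2
    rw [hs1, Finset.mem_image] at hp1
    rw [hs2, Finset.mem_image] at hp2
    obtain ⟨i, hiS, hi⟩ := hp1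
    obtain ⟨j, hjS, hj⟩ := hp2
    rw [← hi] at hj
    have hji : j = i := congrArg Prod.fst hj
    rw [hji] at hjS
    exact Finset.disjoint_left.mp hdisjS12 hiS hjS
  have hPhi : ∀ s : Finset (ι × Bool),
      Measurable fun g : ({x : ι × Bool // x ∈ s} → ℝ≥0∞) => ⨅ p, g p :=
    fun s => Measurable.iInf fun p => measurable_pi_apply p
  have hcomp : ∀ s : Finset (ι × Bool),
      (fun ω => ⨅ p ∈ s, F p ω)
        = (fun g : ({x : ι × Bool // x ∈ s} → ℝ≥0∞) => ⨅ p, g p)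
            ∘ (fun ω (p : {x : ι × Bool // x ∈ s}) => F p.1 ω) := by
    intro s
    funext ω
    show (⨅ p ∈ s, F p ω) = ((fun g : ({x : ι × Bool // x ∈ s} → ℝ≥0∞) => ⨅ p, g p)
      ∘ (fun ω (p : {x : ι × Bool // x ∈ s}) => F p.1 ω)) ω
    simp only [Function.comp_apply]
    exact (iInf_subtype (f := fun p : {x : ι × Bool // x ∈ s} => F p.1 ω)).symm
  have hIndRD : IndepFun R D P := by
    have h := (hInd.indepFun_finset strue sne hdisj_ts hFmeas).comp (hPhi strue) (hPhi sne)
    rw [hRdef, hDdef, hcomp strue, hcomp sne]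
    exact h
  have hInd12 : IndepFun D1 D2 P := by
    have h := (hInd.indepFun_finset s1 s2 hdisj_12 hFmeas).comp (hPhi s1) (hPhi s2)
    rw [hD1def, hD2def, hcomp s1, hcomp s2]
    exact h
  -- event inclusions
  have hsub1 : {ω | R ω ≤ D ω} ⊆
      {ω | (⨅ i, (if w1 i ≤ w2 i then r' i ω else min (r' i ω) (r'' i ω)))
          = (⨅ i, (if w2 i ≤ w1 i then r' i ω else min (r' i ω) (r'' i ω)))} := by
    intro ω hω
    simp only [Set.mem_setOf_eq] at hω ⊢
    rw [hM1 ω, hM2 ω]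
    rw [hDsplit ω] at hω
    rw [inf_eq_left.2 (le_trans hω inf_le_left), inf_eq_left.2 (le_trans hω inf_le_right)]
  have hsub2 : {ω | (⨅ i, (if w1 i ≤ w2 i then r' i ω else min (r' i ω) (r'' i ω)))
          = (⨅ i, (if w2 i ≤ w1 i then r' i ω else min (r' i ω) (r'' i ω)))} ⊆
      {ω | R ω ≤ D ω} ∪ {ω | D1 ω = D2 ω} := by
    intro ω hω
    simp only [Set.mem_setOf_eq, Set.mem_union] at hω ⊢
    by_cases hRD : R ω ≤ D ω
    · exact Or.inl hRD
    · right
      rw [hM1 ω, hM2 ω] at hω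
      have hlt : D1 ω ⊓ D2 ω < R ω := by
        rw [← hDsplit ω]; exact lt_of_not_ge hRD
      rcases inf_lt_iff.mp hlt with h | h
      · by_cases h2 : R ω ≤ D2 ω
        · exfalso
          rw [inf_eq_right.2 h.le, inf_eq_left.2 h2] at hω
          exact absurd hω (ne_of_lt h)
        · rw [inf_eq_right.2 h.le, inf_eq_right.2 (not_le.1 h2).le] at hω
          exact hω
      · by_cases h1 : R ω ≤ D1 ω
        · exfalso
          rw [inf_eq_left.2 h1, inf_eq_right.2 h.le] at hω
          exact absurd hω (ne_of_gt h)
        · rw [inf_eq_right.2 (not_le.1 h1).le, inf_eq_right.2 h.le] at hω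
          exact hω
  -- conclusion
  have hmu_nn : 0 ≤ mu := by rw [← hmu12]; exact add_nonneg hm1_nn hm2_nn
  have htie : P {ω | D1 ω = D2 ω} = 0 :=
    key_eq P D1 D2 hD1m hD2m m1 m2 hm1_nn hm2_nn hmupos htailD1 htailD2 hInd12
  have hRD : P {ω | R ω ≤ D ω} = ENNReal.ofReal (lam / (lam + mu)) :=
    key_le P R D hRm hDm lam mu hlam_nn hmu_nn hposlm htailR htailD hIndRD
  rw [hmaxsum]
  refine le_antisymm ?_ ?_
  · calc P _ ≤ P ({ω | R ω ≤ D ω} ∪ {ω | D1 ω = D2 ω}) := measure_mono hsub2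
      _ ≤ P {ω | R ω ≤ D ω} + P {ω | D1 ω = D2 ω} := measure_union_le _ _
      _ = ENNReal.ofReal (lam / (lam + mu)) := by rw [htie, add_zero, hRD]
  · rw [← hRD]
    exact measure_mono hsub1
end

section
/- Let p_max, p_min ∈ (0, 1] with p_min ≤ p_max, and weights w_max ≥ w_min ≥ 0 with p_max/p_min ≤ w_max/w_min (when w_min > 0). Consider a coupled random outcome where with probability p_min the estimate is a = w_max/p_max − w_min/p_min, with probability p_max − p_min the estimate is a = w_max/p_max, and otherwise a = 0. Then a ≥ 0 always, and E[a] = w_max − w_min. -/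
open MeasureTheory
open scoped Classical

/-- The coordinated L1 (range) estimator `a = a^max − a^min` is nonnegative and unbiased
for `wmax − wmin`, given nested inclusion events with probabilities `pmin ≤ pmax` and
the ratio condition `pmax/pmin ≤ wmax/wmin` (when `wmin > 0`). -/
theorem stmt_9 {Ω : Type*} [MeasurableSpace Ω] (P : Measure Ω) [IsProbabilityMeasure P]
    (Emin Emax : Set Ω) (hEmin : MeasurableSet Emin) (hEmax : MeasurableSet Emax)
    (hnested : Emin ⊆ Emax)
    (pmin pmax wmin wmax : ℝ)
    (hp0 : 0 < pmin) (hpm : pmin ≤ pmax) (hp1 : pmax ≤ 1)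
    (hw0 : 0 ≤ wmin) (hwm : wmin ≤ wmax)
    (hPmin : P Emin = ENNReal.ofReal pmin) (hPmax : P Emax = ENNReal.ofReal pmax)
    (hratio : 0 < wmin → pmax / pmin ≤ wmax / wmin)
    (a : Ω → ℝ)
    (ha : ∀ ω, a ω = if ω ∈ Emin then wmax / pmax - wmin / pmin
                     else if ω ∈ Emax then wmax / pmax else 0) :
    (∀ ω, 0 ≤ a ω) ∧ (∫ ω, a ω ∂P) = wmax - wmin := by
  have hpmax0 : 0 < pmax := lt_of_lt_of_le hp0 hpm
  have hwmax0 : 0 ≤ wmax := le_trans hw0 hwm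
  have hkey : wmin / pmin ≤ wmax / pmax := by
    rcases hw0.lt_or_eq with hw | hw
    · have h := hratio hw
      rw [div_le_div_iff₀ hp0 hpmax0]
      rw [div_le_div_iff₀ hp0 hw] at h
      linarith [h]
    · rw [← hw]
      simp only [zero_div]
      positivity
  constructor
  · intro ω
    rw [ha ω]
    split_ifs with h1 h2
    · linarith
    · positivity
    · exact le_refl 0
  · have heq : a = fun ω => (wmax / pmax) * Emax.indicator (fun _ => (1:ℝ)) ω
        - (wmin / pmin) * Emin.indicator (fun _ => (1:ℝ)) ω := by
      funext ω
      rw [ha ω]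
      by_cases h1 : ω ∈ Emin
      · simp [h1, hnested h1]
      · by_cases h2 : ω ∈ Emax <;> simp [h1, h2]
    rw [heq]
    have hPminlt : P Emin < ⊤ := measure_lt_top _ _
    have hPmaxlt : P Emax < ⊤ := measure_lt_top _ _
    have hintmax : Integrable (fun ω => Emax.indicator (fun _ => (1:ℝ)) ω) P := by
      exact (integrable_indicator_iff hEmax).2 (integrableOn_const hPmaxlt.ne)
    have hintmin : Integrable (fun ω => Emin.indicator (fun _ => (1:ℝ)) ω) P := by
      exact (integrable_indicator_iff hEmin).2 (integrableOn_const hPminlt.ne)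
    rw [integral_sub (hintmax.const_mul _) (hintmin.const_mul _),
      integral_const_mul, integral_const_mul,
      integral_indicator_const _ hEmax, integral_indicator_const _ hEmin,
      measureReal_def, measureReal_def, smul_eq_mul, smul_eq_mul, mul_one, mul_one,
      hPmin, hPmax, ENNReal.toReal_ofReal hp0.le, ENNReal.toReal_ofReal hpmax0.le]
    field_simp
end

section
/- With the coupling of the previous context (min-inclusion event nested inside max-inclusion event, probabilities p_min ≤ p_max), the variance of the L1 estimator satisfies Var[a^{L1}] = Var[a^{max}] + Var[a^{min}] − 2·w_max·w_min·(1/p_max − 1), and in particular Var[a^{L1}] ≤ Var[a^{max}] + Var[a^{min}]. -/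
open MeasureTheory
open scoped Classical

/-- Variance of the L1 estimator `a^{L1} = a^{max} − a^{min}` with nested inclusion events:
`Var[a^{L1}] = Var[a^{max}] + Var[a^{min}] − 2 wmax wmin (1/pmax − 1)`, hence
`Var[a^{L1}] ≤ Var[a^{max}] + Var[a^{min}]`. -/
theorem stmt_10 {Ω : Type*} [MeasurableSpace Ω] (P : Measure Ω) [IsProbabilityMeasure P]
    (Emin Emax : Set Ω) (hEmin : MeasurableSet Emin) (hEmax : MeasurableSet Emax)
    (hnested : Emin ⊆ Emax)
    (pmin pmax wmin wmax : ℝ)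
    (hp0 : 0 < pmin) (hpm : pmin ≤ pmax) (hp1 : pmax ≤ 1)
    (hw0 : 0 ≤ wmin) (hwm : wmin ≤ wmax)
    (hPmin : P Emin = ENNReal.ofReal pmin) (hPmax : P Emax = ENNReal.ofReal pmax)
    (amax amin aL1 : Ω → ℝ)
    (hamax : ∀ ω, amax ω = if ω ∈ Emax then wmax / pmax else 0)
    (hamin : ∀ ω, amin ω = if ω ∈ Emin then wmin / pmin else 0)
    (haL1 : ∀ ω, aL1 ω = amax ω - amin ω) :
    (∫ ω, (aL1 ω - (wmax - wmin)) ^ 2 ∂P)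
        = wmax ^ 2 * (1 / pmax - 1) + wmin ^ 2 * (1 / pmin - 1)
          - 2 * wmax * wmin * (1 / pmax - 1)
      ∧ (∫ ω, (aL1 ω - (wmax - wmin)) ^ 2 ∂P)
        ≤ wmax ^ 2 * (1 / pmax - 1) + wmin ^ 2 * (1 / pmin - 1) := by
  have hpmax0 : 0 < pmax := lt_of_lt_of_le hp0 hpm
  set c1 : ℝ := (wmax / pmax - wmin / pmin - (wmax - wmin)) ^ 2 with hc1
  set c2 : ℝ := (wmax / pmax - (wmax - wmin)) ^ 2 with hc2
  set c3 : ℝ := (wmax - wmin) ^ 2 with hc3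
  have hfun : ∀ ω, (aL1 ω - (wmax - wmin)) ^ 2
      = c3 + Emax.indicator (fun _ => c2 - c3) ω + Emin.indicator (fun _ => c1 - c2) ω := by
    intro ω
    simp only [haL1, hamax, hamin, Set.indicator]
    by_cases hmin : ω ∈ Emin
    · have hmax : ω ∈ Emax := hnested hmin
      simp [hmin, hmax, hc1]
    · by_cases hmax : ω ∈ Emax
      · simp [hmin, hmax, hc2]
      · simp [hmin, hmax, hc3]; ring
  have hint : (∫ ω, (aL1 ω - (wmax - wmin)) ^ 2 ∂P)
      = c3 + (c2 - c3) * pmax + (c1 - c2) * pmin := by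
    rw [integral_congr_ae (Filter.Eventually.of_forall hfun)]
    have hImax : Integrable (Emax.indicator (fun _ => c2 - c3)) P :=
      (integrable_const _).indicator hEmax
    have hImin : Integrable (Emin.indicator (fun _ => c1 - c2)) P :=
      (integrable_const _).indicator hEmin
    have hI1 : Integrable (fun ω => c3 + Emax.indicator (fun _ => c2 - c3) ω) P :=
      (integrable_const _).add hImax
    rw [integral_add hI1 hImin,
        integral_add (integrable_const _) hImax,
        integral_indicator_const _ hEmax, integral_indicator_const _ hEmin,
        integral_const, measureReal_def, measureReal_def, measureReal_def, hPmin, hPmax]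
    simp [ENNReal.toReal_ofReal hp0.le, ENNReal.toReal_ofReal hpmax0.le]
    ring
  constructor
  · rw [hint, hc1, hc2, hc3]
    field_simp
    ring
  · rw [hint, hc1, hc2, hc3]
    have h1 : 1 ≤ 1 / pmax := by
      rw [le_div_iff₀ hpmax0]; linarith
    have hwmax : 0 ≤ wmax := le_trans hw0 hwm
    have key : 0 ≤ 2 * wmax * wmin * (1 / pmax - 1) :=
      mul_nonneg (mul_nonneg (mul_nonneg (by norm_num) hwmax) hw0) (by linarith)
    have heq : (wmax - wmin) ^ 2 + ((wmax / pmax - (wmax - wmin)) ^ 2 - (wmax - wmin) ^ 2) * pmax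
        + ((wmax / pmax - wmin / pmin - (wmax - wmin)) ^ 2 - (wmax / pmax - (wmax - wmin)) ^ 2) * pmin
        = wmax ^ 2 * (1 / pmax - 1) + wmin ^ 2 * (1 / pmin - 1)
          - 2 * wmax * wmin * (1 / pmax - 1) := by
      field_simp
      ring
    rw [heq]
    linarith
end

section
/- Let d₁, ..., d_h be independent random variables with d_j ~ Exp(w_j − w_{j−1}) where 0 = w₀ ≤ w₁ ≤ ... ≤ w_h (interpreting Exp(0) as +∞), and define r_j = min(d₁, ..., d_j). Then r_j is exponentially distributed with rate w_j for each j, and the sequence r₁ ≥ r₂ ≥ ... ≥ r_h is monotone non-increasing. -/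
open MeasureTheory ProbabilityTheory
open scoped ENNReal

/-- Independent-differences rank construction: with `0 = w 0 ≤ w 1 ≤ ... ≤ w h` and
independent `d j ~ Exp(w (j+1) − w j)` (interpreting `Exp 0` as the constant `∞`,
characterized here by the tail function), the ranks `r j = min (d 0, ..., d j)` are
exponentially distributed with rate `w (j+1)` and form a non-increasing sequence. -/
theorem stmt_19 {Ω : Type*} [MeasurableSpace Ω] (P : Measure Ω) [IsProbabilityMeasure P]
    (h : ℕ) (w : ℕ → ℝ) (hw0 : w 0 = 0) (hwmono : Monotone w)
    (d : Fin h → Ω → ℝ≥0∞) (hdmeas : ∀ j, Measurable (d j))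
    (hInd : iIndepFun d P)
    (hdtail : ∀ j : Fin h, ∀ t : ℝ, 0 ≤ t →
      P {ω | ENNReal.ofReal t < d j ω}
        = ENNReal.ofReal (Real.exp (-(w (j + 1) - w j) * t)))
    (r : Fin h → Ω → ℝ≥0∞)
    (hr : ∀ (j : Fin h) ω, r j ω = (Finset.Iic j).inf (fun a => d a ω)) :
    (∀ j : Fin h, ∀ t : ℝ, 0 ≤ t →
        P {ω | ENNReal.ofReal t < r j ω} = ENNReal.ofReal (Real.exp (-(w (j + 1)) * t)))
      ∧ ∀ ω, ∀ j k : Fin h, j ≤ k → r k ω ≤ r j ω := by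
  constructor
  · intro j t ht
    have hset : {ω | ENNReal.ofReal t < r j ω}
        = ⋂ a ∈ Finset.Iic j, d a ⁻¹' {x | ENNReal.ofReal t < x} := by
      ext ω
      simp only [Set.mem_setOf_eq, Set.mem_iInter, Set.mem_preimage, hr]
      exact Finset.lt_inf_iff ENNReal.ofReal_lt_top
    rw [hset, hInd.meas_biInter (fun a _ =>
      ⟨{x | ENNReal.ofReal t < x}, measurableSet_lt measurable_const measurable_id, rfl⟩)]
    have hprod : ∀ a ∈ Finset.Iic j, P (d a ⁻¹' {x | ENNReal.ofReal t < x})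
        = ENNReal.ofReal (Real.exp (-(w (a + 1) - w a) * t)) := fun a _ => hdtail a t ht
    rw [Finset.prod_congr rfl hprod, ← ENNReal.ofReal_prod_of_nonneg
      (fun a _ => (Real.exp_pos _).le), ← Real.exp_sum]
    have hsum : ∑ a ∈ Finset.Iic j, (-(w (↑a + 1) - w ↑a) * t) = -(w (↑j + 1)) * t := by
      have h1 : ∑ a ∈ Finset.Iic j, (-(w (↑a + 1) - w ↑a) * t)
          = ∑ a ∈ Finset.range ((j : ℕ) + 1), (-(w (a + 1) - w a) * t) := by
        refine Finset.sum_nbij' (fun a => (a : ℕ))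
          (fun n => (⟨min n (j : ℕ), lt_of_le_of_lt (min_le_right _ _) j.isLt⟩ : Fin h))
          ?_ ?_ ?_ ?_ ?_
        · intro a ha
          simp only [Finset.mem_Iic] at ha
          simp only [Finset.mem_range]
          omega
        · intro n hn
          simp only [Finset.mem_range] at hn
          simp only [Finset.mem_Iic, Fin.le_def]
          simp only [min_le_right]
        · intro a ha
          simp only [Finset.mem_Iic] at ha
          have : (a : ℕ) ≤ (j : ℕ) := ha
          simp [Fin.ext_iff, min_eq_left this]
        · intro n hn
          simp only [Finset.mem_range] at hn
          simp [min_eq_left (by omega : n ≤ (j : ℕ))]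
        · intro a ha
          simp only [Finset.mem_Iic] at ha
          have : min (a : ℕ) (j : ℕ) = (a : ℕ) := min_eq_left ha
          simp [this]
      rw [h1, ← Finset.sum_mul]
      have h2 : ∑ a ∈ Finset.range ((j : ℕ) + 1), -(w (a + 1) - w a)
          = -(∑ a ∈ Finset.range ((j : ℕ) + 1), (w (a + 1) - w a)) := by
        rw [Finset.sum_neg_distrib]
      rw [h2, Finset.sum_range_sub, hw0, sub_zero]
    rw [hsum]
  · intro ω j k hjk
    rw [hr, hr]
    exact Finset.inf_mono (Finset.Iic_subset_Iic.mpr hjk)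
end
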